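/- Let S be an Artinian Gorenstein local ring and let A be an ideal of S. Then the annihilator of the annihilator of A equals A, i.e., (0 :_S (0 :_S A)) = A. -/

import Mathlib

/-- In an Artinian local ring there is a nonzero element killing the maximal ideal. -/
lemma exists_socle_elt (S : Type*) [CommRing S] [IsArtinianRing S] [IsLocalRing S] :
    ∃ y : S, y ≠ 0 ∧ ∀ s ∈ IsLocalRing.maximalIdeal S, y * s = 0 := by
  have hnil : IsNilpotent (IsLocalRing.maximalIdeal S) := by
    have := IsArtinianRing.isNilpotent_jacobson_bot (R := S)
    rwa [IsLocalRing.jacobson_eq_maximalIdeal (⊥ : Ideal S) bot_ne_top] at this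
  obtain ⟨n, hn⟩ := hnil
  have hex : ∃ k, (IsLocalRing.maximalIdeal S) ^ k = ⊥ := ⟨n, hn⟩
  classical
  set k := Nat.find hex with hk
  have hkbot : (IsLocalRing.maximalIdeal S) ^ k = ⊥ := Nat.find_spec hex
  have hk1 : k ≠ 0 := by
    intro h
    rw [h, pow_zero, Ideal.one_eq_top] at hkbot
    exact (bot_ne_top (α := Ideal S)).symm hkbot
  have hprev : (IsLocalRing.maximalIdeal S) ^ (k - 1) ≠ ⊥ :=
    Nat.find_min hex (Nat.sub_lt (Nat.pos_of_ne_zero hk1) one_pos)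
  obtain ⟨y, hy, hy0⟩ := Submodule.exists_mem_ne_zero_of_ne_bot hprev
  refine ⟨y, hy0, fun s hs => ?_⟩
  have : y * s ∈ (IsLocalRing.maximalIdeal S) ^ k := by
    have : y * s ∈ (IsLocalRing.maximalIdeal S) ^ (k - 1) * IsLocalRing.maximalIdeal S :=
      Ideal.mul_mem_mul hy hs
    rwa [← pow_succ, Nat.sub_add_cancel (Nat.one_le_iff_ne_zero.2 hk1)] at this
  rwa [hkbot, Ideal.mem_bot] at this

/-- Gorenstein duality for an Artinian Gorenstein local ring `S`
(Gorenstein meaning `S` is injective as a module over itself):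
the annihilator of the annihilator of an ideal `A` is `A` itself. -/
theorem ann_ann_eq (S : Type*) [CommRing S] [IsArtinianRing S] [IsLocalRing S]
    [Module.Injective S S] (A : Ideal S) :
    Submodule.colon (⊥ : Ideal S) (Submodule.colon (⊥ : Ideal S) A : Ideal S) = A := by
  apply le_antisymm
  · -- hard direction
    intro x hx
    by_contra hxA
    -- I = (A : x)
    set I : Ideal S := A.colon (Submodule.span S {x}) with hI
    have hxI : ∀ s : S, s ∈ I ↔ s * x ∈ A := by
      intro s
      rw [hI, Submodule.mem_colon_span_singleton, smul_eq_mul]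
    have hItop : I ≠ ⊤ := by
      intro h
      have : (1 : S) ∈ I := h ▸ Submodule.mem_top
      rw [hxI, one_mul] at this
      exact hxA this
    have hIm : I ≤ IsLocalRing.maximalIdeal S := IsLocalRing.le_maximalIdeal hItop
    obtain ⟨y, hy0, hy⟩ := exists_socle_elt S
    -- f : S⧸I → S⧸A induced by multiplication by x
    have hle : I ≤ Submodule.comap (LinearMap.lsmul S S x) A := by
      intro s hs
      rw [Submodule.mem_comap]
      simp only [LinearMap.lsmul_apply, smul_eq_mul]
      rw [mul_comm]
      exact (hxI s).1 hs
    set f : (S ⧸ I) →ₗ[S] (S ⧸ A) := Submodule.mapQ I A (LinearMap.lsmul S S x) hle with hf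
    have hfinj : Function.Injective f := by
      rw [← LinearMap.ker_eq_bot]
      apply Submodule.ker_liftQ_eq_bot
      intro s hs
      simp only [LinearMap.mem_ker, LinearMap.coe_comp, Function.comp_apply,
        LinearMap.lsmul_apply, smul_eq_mul, Submodule.mkQ_apply] at hs
      have : x * s ∈ A := (Submodule.Quotient.mk_eq_zero A).1 hs
      rw [hxI, mul_comm]
      exact this
    -- g : S⧸I → S induced by multiplication by y
    have hleg : I ≤ LinearMap.ker (LinearMap.lsmul S S y) := by
      intro s hs
      simp only [LinearMap.mem_ker, LinearMap.lsmul_apply, smul_eq_mul]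
      exact hy s (hIm hs)
    set g : (S ⧸ I) →ₗ[S] S := Submodule.liftQ I (LinearMap.lsmul S S y) hleg with hg
    obtain ⟨h, hh⟩ := Module.Injective.out f hfinj g
    have key : h (Submodule.Quotient.mk x) = y := by
      have := hh (Submodule.Quotient.mk 1)
      simp only [hf, hg, Submodule.mapQ_apply, Submodule.liftQ_apply,
        LinearMap.lsmul_apply, smul_eq_mul, mul_one] at this
      exact this
    set z : S := h (Submodule.Quotient.mk 1) with hz
    have hzann : z ∈ Submodule.colon (⊥ : Ideal S) A := by
      rw [Submodule.mem_colon]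
      intro a ha
      have : (Submodule.Quotient.mk (a * 1) : S ⧸ A) = 0 := by
        rw [mul_one]
        exact (Submodule.Quotient.mk_eq_zero A).2 ha
      have := calc a • z = h (a • Submodule.Quotient.mk 1) := (h.map_smul a _).symm
        _ = h (Submodule.Quotient.mk (a * 1)) := by rw [← Submodule.Quotient.mk_smul]; rfl
        _ = 0 := by rw [this, h.map_zero]
      simpa [smul_eq_mul, mul_comm] using this
    have hxz : x • z = 0 := by
      have := (Submodule.mem_colon.1 hx) z hzann
      simpa using this
    have : h (Submodule.Quotient.mk x) = 0 := by
      calc h (Submodule.Quotient.mk x) = h (x • Submodule.Quotient.mk 1) := by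
            rw [← Submodule.Quotient.mk_smul]; simp
        _ = x • z := h.map_smul x _
        _ = 0 := hxz
    exact hy0 (key ▸ this)
  · -- easy direction
    intro a ha
    rw [Submodule.mem_colon]
    intro p hp
    have := (Submodule.mem_colon.1 hp) a ha
    rw [Submodule.mem_bot] at this ⊢
    rw [smul_eq_mul] at this ⊢
    rw [mul_comm]
    exact this
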